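/- Let τ₁, τ₂ ∈ [0,1) and θ satisfy the stepsize condition θ ∈ (0, (1 − 2τ₁ + √((1−2τ₁)² + 4(1−τ₁)))/(2(1−τ₁))). Then there exists σ ∈ [τ₂, 1) such that the symmetric matrix G = [[σ − 1 + (σ − τ₁)θ, (1 − θ)(σ − 1 + (1 − τ₁)θ)], [(1 − θ)(σ − 1 + (1 − τ₁)θ), σ − 1 + (2 − θ − τ₁)θ]] is positive semidefinite. -/

import Mathlib

set_option maxHeartbeats 1000000

lemma psd2 (A B C : ℝ) (hA : 0 ≤ A) (hC : 0 ≤ C) (hdet : B ^ 2 ≤ A * C) :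
    (!![A, B; B, C]).PosSemidef := by
  rw [Matrix.posSemidef_iff_dotProduct_mulVec]
  constructor
  · ext i j
    fin_cases i <;> fin_cases j <;> simp [Matrix.conjTranspose, Matrix.vecHead, Matrix.vecTail]
  · intro x
    simp [Matrix.mulVec, dotProduct, Fin.sum_univ_two]
    rcases eq_or_lt_of_le hA with h | h
    · have hB : B = 0 := by nlinarith [sq_nonneg B]
      subst hB
      nlinarith [sq_nonneg (x 1), sq_nonneg (x 0)]
    · nlinarith [sq_nonneg (A * x 0 + B * x 1), mul_nonneg (sub_nonneg.2 hdet) (sq_nonneg (x 1))]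

theorem stmt_12 (τ₁ τ₂ θ : ℝ) (h0 : 0 ≤ τ₁) (h1 : τ₁ < 1)
    (h0' : 0 ≤ τ₂) (h1' : τ₂ < 1) (hθ0 : 0 < θ)
    (hθ : θ < (1 - 2 * τ₁ + Real.sqrt ((1 - 2 * τ₁) ^ 2 + 4 * (1 - τ₁))) /
      (2 * (1 - τ₁))) :
    ∃ σ : ℝ, τ₂ ≤ σ ∧ σ < 1 ∧
      (!![σ - 1 + (σ - τ₁) * θ, (1 - θ) * (σ - 1 + (1 - τ₁) * θ);
          (1 - θ) * (σ - 1 + (1 - τ₁) * θ), σ - 1 + (2 - θ - τ₁) * θ]).PosSemidef := by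
  have ht : 0 < 1 - τ₁ := by linarith
  set S := Real.sqrt ((1 - 2 * τ₁) ^ 2 + 4 * (1 - τ₁)) with hSdef
  have hS0 : 0 ≤ S := Real.sqrt_nonneg _
  have hS2 : S ^ 2 = (1 - 2 * τ₁) ^ 2 + 4 * (1 - τ₁) := Real.sq_sqrt (by nlinarith)
  have hSpos : 0 < S := by nlinarith
  have h' : 2 * (1 - τ₁) * θ - (1 - 2 * τ₁) < S := by
    have := (lt_div_iff₀ (by positivity : (0:ℝ) < 2 * (1 - τ₁))).mp hθ
    linarith
  have hF : 0 < 1 + (1 - 2 * τ₁) * θ - (1 - τ₁) * θ ^ 2 := by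
    rcases le_or_gt 0 (2 * (1 - τ₁) * θ - (1 - 2 * τ₁)) with hx | hx
    · have hp : 0 < (S - (2 * (1 - τ₁) * θ - (1 - 2 * τ₁))) *
          (S + (2 * (1 - τ₁) * θ - (1 - 2 * τ₁))) :=
        mul_pos (by linarith) (by linarith)
      nlinarith [hp, hS2, ht]
    · nlinarith [mul_pos hθ0 (by linarith : (0:ℝ) < (1 - 2 * τ₁) - 2 * (1 - τ₁) * θ),
        mul_nonneg ht.le (sq_nonneg θ)]
  have hθ2 : θ < 2 := by
    nlinarith [hS2, hS0, h', ht, sq_nonneg (S - (2 * (1 - τ₁) + 1)), mul_pos ht ht]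
  have h2θ : 0 < 2 - θ - τ₁ := by
    nlinarith [mul_nonneg ht.le (sq_nonneg (1 - θ))]
  set F := 1 + (1 - 2 * τ₁) * θ - (1 - τ₁) * θ ^ 2 with hFdef
  set δ := min (min ((1 - τ₂) / 2) ((1 - τ₁) * θ / 3))
      (min ((2 - θ - τ₁) * θ / 2) (θ * (1 - τ₁) * F / 9)) with hδdef
  have hδpos : 0 < δ := by
    refine lt_min (lt_min (by linarith) ?_) (lt_min ?_ ?_)
    · exact div_pos (mul_pos ht hθ0) (by norm_num)
    · exact div_pos (mul_pos h2θ hθ0) (by norm_num)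
    · exact div_pos (mul_pos (mul_pos hθ0 ht) hF) (by norm_num)
  have hd1 : δ ≤ (1 - τ₂) / 2 := (min_le_left _ _).trans (min_le_left _ _)
  have hd2 : δ ≤ (1 - τ₁) * θ / 3 := (min_le_left _ _).trans (min_le_right _ _)
  have hd3 : δ ≤ (2 - θ - τ₁) * θ / 2 := (min_le_right _ _).trans (min_le_left _ _)
  have hd4 : δ ≤ θ * (1 - τ₁) * F / 9 := (min_le_right _ _).trans (min_le_right _ _)
  set σ := max τ₂ (1 - δ) with hσdef
  have hlo : 1 - δ ≤ σ := le_max_right _ _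
  have hτσ : τ₂ ≤ σ := le_max_left _ _
  have hhi : σ < 1 := max_lt h1' (by linarith)
  have hc1 : (1 - τ₁) + (1 + θ) * (2 - θ - τ₁) - 2 * (1 - τ₁) * (1 - θ) ^ 2 ≤ 7 := by
    nlinarith [mul_nonneg ht.le (sq_nonneg (1 - θ)), mul_pos hθ0 ht, sq_nonneg θ,
      mul_nonneg hθ0.le h0]
  rw [hFdef] at hd4 hF
  clear_value S F δ σ
  clear hθ hSdef hFdef hδdef hσdef hd1
  refine ⟨σ, hτσ, hhi, psd2 _ _ _ ?_ ?_ ?_⟩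
  · -- 0 ≤ σ - 1 + (σ - τ₁) * θ
    nlinarith [mul_nonneg (by linarith : (0:ℝ) ≤ σ - (1 - δ)) (by linarith : (0:ℝ) ≤ 1 + θ),
      mul_nonneg hδpos.le (by linarith : (0:ℝ) ≤ 2 - θ)]
  · -- 0 ≤ σ - 1 + (2 - θ - τ₁) * θ
    nlinarith [mul_pos h2θ hθ0]
  · -- B^2 ≤ A*C
    nlinarith [mul_nonneg (mul_nonneg hθ0.le (by linarith : (0:ℝ) ≤ 1 - σ))
        (by linarith : (0:ℝ) ≤ 7 - ((1 - τ₁) + (1 + θ) * (2 - θ - τ₁) - 2 * (1 - τ₁) * (1 - θ) ^ 2)),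
      mul_nonneg (mul_nonneg hθ0.le (by linarith : (0:ℝ) ≤ 3 - θ)) (sq_nonneg (σ - 1)),
      mul_nonneg hθ0.le (by linarith : (0:ℝ) ≤ σ - 1 + δ),
      mul_nonneg hθ0.le (by linarith : (0:ℝ) ≤ θ * (1 - τ₁) * (1 + (1 - 2 * τ₁) * θ - (1 - τ₁) * θ ^ 2) / 9 - δ),
      mul_nonneg (mul_nonneg (sq_nonneg θ) ht.le) hF.le]
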